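/- In the lower-bound MDP family: for each parameter matrix φ ∈ [A]^{H×S}, the MDP M_φ (horizon 2H+1, states s₁,…,s_S plus absorbing good/bad states, where at step h ≤ H in state s_i every action leads back to s_i with probability 1 − 1/H and to the good/bad states with probabilities 1/(2H)(1 ± 2τ·1{a = a_{φ_{h,i}}} with sign + for good under the optimal action, else 1/(2H) each), and reaching the good state yields total reward H) has minimum suboptimality gap exactly τ: for every h ∈ [H], state s_i, and non-optimal action a ≠ a_{φ_{h,i}}, V*ₕ(s_i) − Q*ₕ(s_i, a) = τ. -/

import Mathlib

/-- `val P r π n h s` : expected cumulative reward of running deterministic policy `π`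
for `n` steps starting at time `h` in state `s`; for a horizon-`T` MDP the value
function is `Vₕ^π(s) = val P r π (T + 1 - h) h s`. -/
noncomputable def val {S A : Type} [Fintype S]
    (P : ℕ → S → A → S → ℝ) (r : ℕ → S → A → ℝ) (π : ℕ → S → A) :
    ℕ → ℕ → S → ℝ
  | 0, _, _ => 0
  | n + 1, h, s => r h s (π h s) + ∑ s', P h s (π h s) s' * val P r π n (h + 1) s'

/-- Transition kernel of the lower-bound MDP `M_φ`.  States are `Sum.inl i`
(true states `s_i`), `Sum.inr true` (good absorbing state) and `Sum.inr false`
(bad absorbing state).  For `h ≤ H`, in `s_i` every action stays in `s_i` with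
probability `1 - 1/H` and moves to the good/bad states with probabilities
`(1 ± 2τ·1{a = φ h i})/(2H)`; at step `H + 1` the true states split `1/2`–`1/2`
between good and bad; the good and bad states are absorbing. -/
noncomputable def lbP (H : ℕ) (τ : ℝ) (Sn An : ℕ) (φ : ℕ → Fin Sn → Fin An) :
    ℕ → (Fin Sn ⊕ Bool) → Fin An → (Fin Sn ⊕ Bool) → ℝ :=
  fun h s a s' =>
    match s, s' with
    | Sum.inl i, Sum.inl j =>
        if h ≤ H ∧ j = i then 1 - 1 / (H : ℝ) else 0
    | Sum.inl i, Sum.inr good =>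
        if h ≤ H then
          (1 / (2 * (H : ℝ))) *
            (1 + (if a = φ h i then (if good then 2 * τ else -(2 * τ)) else 0))
        else if h = H + 1 then (1 / 2 : ℝ) else 0
    | Sum.inr good, Sum.inr good' => if good' = good then 1 else 0
    | Sum.inr _, Sum.inl _ => 0

/-- Reward of the lower-bound MDP: reward `1` in the good state at every step
`h ≥ H + 2` (so reaching the good state yields total reward `H` over the horizon
`2H + 1`), and `0` everywhere else. -/
noncomputable def lbr (H : ℕ) (Sn An : ℕ) :
    ℕ → (Fin Sn ⊕ Bool) → Fin An → ℝ :=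
  fun h s _ => if s = Sum.inr true ∧ H + 2 ≤ h then 1 else 0


section Aux

variable {H Sn An : ℕ} {τ : ℝ} {φ : ℕ → Fin Sn → Fin An}

/-- Value only depends on the policy from time `h` onwards. -/
lemma val_congr {S A : Type} [Fintype S] (P : ℕ → S → A → S → ℝ)
    (r : ℕ → S → A → ℝ) (π π' : ℕ → S → A) :
    ∀ n h s, (∀ t s', h ≤ t → π t s' = π' t s') →
      val P r π n h s = val P r π' n h s := by
  intro n
  induction n with
  | zero => intro h s _; simp [val]
  | succ n ih =>
    intro h s hag
    have h1 : π h s = π' h s := hag h s le_rfl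
    simp only [val, h1]
    congr 1
    refine Finset.sum_congr rfl fun s' _ => ?_
    rw [ih (h + 1) s' (fun t s'' ht => hag t s'' (by omega))]

/-- The bad absorbing state has value `0`. -/
lemma val_bad (π : ℕ → (Fin Sn ⊕ Bool) → Fin An) :
    ∀ n h, val (lbP H τ Sn An φ) (lbr H Sn An) π n h (Sum.inr false) = 0 := by
  intro n
  induction n with
  | zero => intro h; simp [val]
  | succ n ih =>
    intro h
    simp [val, lbP, lbr, Fintype.sum_sum_type, ih]

/-- After time `H + 2`, the good state collects reward `1` every step. -/
lemma val_good_late (π : ℕ → (Fin Sn ⊕ Bool) → Fin An) :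
    ∀ n h, H + 2 ≤ h → val (lbP H τ Sn An φ) (lbr H Sn An) π n h (Sum.inr true) = n := by
  intro n
  induction n with
  | zero => intro h _; simp [val]
  | succ n ih =>
    intro h hh
    simp [val, lbP, lbr, Fintype.sum_sum_type, ih (h + 1) (by omega), hh]
    ring

/-- Value of the good state at time `H + 2 - k` with `H + k` remaining steps is `H`. -/
lemma val_good (π : ℕ → (Fin Sn ⊕ Bool) → Fin An) :
    ∀ k, k ≤ H + 2 →
      val (lbP H τ Sn An φ) (lbr H Sn An) π (H + k) (H + 2 - k) (Sum.inr true) = H := by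
  intro k
  induction k with
  | zero => intro _; simpa using val_good_late (H := H) (τ := τ) (φ := φ) π H (H + 2) le_rfl
  | succ k ih =>
    intro hk
    have hlt : ¬ (H + 2 ≤ H + 2 - (k + 1)) := by omega
    have hstep : H + 2 - (k + 1) + 1 = H + 2 - k := by omega
    have hne : ¬ (H + 2 - (k + 1) = H + 2) := by omega
    simp only [val, lbP, lbr, Fintype.sum_sum_type, Fintype.sum_bool, hstep, Nat.add_eq]
    rw [ih (by omega), val_bad]
    simp [hlt]
    omega

/-- One-step expansion of the `Q`-value at a true state, `h ≤ H`. -/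
lemma q_step (π : ℕ → (Fin Sn ⊕ Bool) → Fin An) (n h : ℕ) (i : Fin Sn) (a : Fin An)
    (hh : h ≤ H) :
    lbr H Sn An h (Sum.inl i) a
      + ∑ s', lbP H τ Sn An φ h (Sum.inl i) a s' *
          val (lbP H τ Sn An φ) (lbr H Sn An) π n (h + 1) s'
    = (1 - 1 / (H : ℝ)) * val (lbP H τ Sn An φ) (lbr H Sn An) π n (h + 1) (Sum.inl i)
      + (1 / (2 * (H : ℝ))) * (1 + if a = φ h i then 2 * τ else 0) *
          val (lbP H τ Sn An φ) (lbr H Sn An) π n (h + 1) (Sum.inr true) := by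
  rw [show (∑ s', lbP H τ Sn An φ h (Sum.inl i) a s' *
        val (lbP H τ Sn An φ) (lbr H Sn An) π n (h + 1) s')
      = ∑ j : Fin Sn, lbP H τ Sn An φ h (Sum.inl i) a (Sum.inl j) *
          val (lbP H τ Sn An φ) (lbr H Sn An) π n (h + 1) (Sum.inl j)
        + ∑ b : Bool, lbP H τ Sn An φ h (Sum.inl i) a (Sum.inr b) *
          val (lbP H τ Sn An φ) (lbr H Sn An) π n (h + 1) (Sum.inr b)
      from Fintype.sum_sum_type _]
  rw [Fintype.sum_bool, val_bad]
  simp [lbP, lbr, hh, ite_mul, zero_mul, Finset.sum_ite_eq']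
  try ring

end Aux

/-- In the lower-bound MDP `M_φ` (horizon `2H + 1`), every non-optimal action
`a ≠ φ h i` at a true state `s_i`, `h ∈ [H]`, has suboptimality gap exactly `τ`:
`V*ₕ(s_i) - Q*ₕ(s_i, a) = τ`. -/
theorem stmt_19 (H : ℕ) (hH : 2 ≤ H) (τ : ℝ) (hτ0 : 0 < τ) (hτ1 : τ < 1 / 2)
    (Sn An : ℕ) (φ : ℕ → Fin Sn → Fin An)
    (πstar : ℕ → (Fin Sn ⊕ Bool) → Fin An)
    (hopt : ∀ (π : ℕ → (Fin Sn ⊕ Bool) → Fin An) n h s,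
      val (lbP H τ Sn An φ) (lbr H Sn An) π n h s
        ≤ val (lbP H τ Sn An φ) (lbr H Sn An) πstar n h s) :
    ∀ h ∈ Finset.Icc 1 H, ∀ (i : Fin Sn) (a : Fin An), a ≠ φ h i →
      val (lbP H τ Sn An φ) (lbr H Sn An) πstar (2 * H + 2 - h) h (Sum.inl i)
        - (lbr H Sn An h (Sum.inl i) a
            + ∑ s', lbP H τ Sn An φ h (Sum.inl i) a s' *
                val (lbP H τ Sn An φ) (lbr H Sn An) πstar (2 * H + 1 - h) (h + 1) s')
        = τ := by
  intro h hh i a ha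
  rw [Finset.mem_Icc] at hh
  obtain ⟨hh1, hh2⟩ := hh
  have hHr : (H : ℝ) ≠ 0 := by positivity
  have hn : 2 * H + 2 - h = (2 * H + 1 - h) + 1 := by omega
  set n := 2 * H + 1 - h with hn'
  -- value of the good state at time h+1 with n steps
  have hgood : val (lbP H τ Sn An φ) (lbr H Sn An) πstar n (h + 1) (Sum.inr true) = H := by
    have := val_good (H := H) (τ := τ) (φ := φ) πstar (H + 1 - h) (by omega)
    rw [show H + 2 - (H + 1 - h) = h + 1 by omega, show H + (H + 1 - h) = n by omega] at this
    exact this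
  set W := val (lbP H τ Sn An φ) (lbr H Sn An) πstar n (h + 1) (Sum.inl i) with hW
  -- expand V* one step
  have hV : val (lbP H τ Sn An φ) (lbr H Sn An) πstar (2 * H + 2 - h) h (Sum.inl i)
      = (1 - 1 / (H : ℝ)) * W
        + (1 / (2 * (H : ℝ))) *
            (1 + if πstar h (Sum.inl i) = φ h i then 2 * τ else 0) * H := by
    rw [hn]
    show lbr H Sn An h (Sum.inl i) (πstar h (Sum.inl i))
        + ∑ s', lbP H τ Sn An φ h (Sum.inl i) (πstar h (Sum.inl i)) s' *
            val (lbP H τ Sn An φ) (lbr H Sn An) πstar n (h + 1) s' = _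
    rw [q_step πstar n h i _ hh2, hgood]
  -- expand the Q-value
  have hQ : lbr H Sn An h (Sum.inl i) a
      + ∑ s', lbP H τ Sn An φ h (Sum.inl i) a s' *
          val (lbP H τ Sn An φ) (lbr H Sn An) πstar n (h + 1) s'
      = (1 - 1 / (H : ℝ)) * W + (1 / (2 * (H : ℝ))) * 1 * H := by
    rw [q_step πstar n h i a hh2, hgood, if_neg ha, ← hW, add_zero]
  -- the modified policy taking the optimal action at (h, s_i)
  set π' : ℕ → (Fin Sn ⊕ Bool) → Fin An :=
    fun t s => if t = h ∧ s = Sum.inl i then φ h i else πstar t s with hπ'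
  have hagree : ∀ t s', h + 1 ≤ t → π' t s' = πstar t s' := by
    intro t s' ht
    have hne : ¬ (t = h ∧ s' = Sum.inl i) := by rintro ⟨rfl, -⟩; omega
    simp [hπ', hne]
  have hV' : val (lbP H τ Sn An φ) (lbr H Sn An) π' (2 * H + 2 - h) h (Sum.inl i)
      = (1 - 1 / (H : ℝ)) * W + (1 / (2 * (H : ℝ))) * (1 + 2 * τ) * H := by
    rw [hn]
    show lbr H Sn An h (Sum.inl i) (π' h (Sum.inl i))
        + ∑ s', lbP H τ Sn An φ h (Sum.inl i) (π' h (Sum.inl i)) s' *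
            val (lbP H τ Sn An φ) (lbr H Sn An) π' n (h + 1) s' = _
    have hsum : ∀ s', val (lbP H τ Sn An φ) (lbr H Sn An) π' n (h + 1) s'
        = val (lbP H τ Sn An φ) (lbr H Sn An) πstar n (h + 1) s' := fun s' =>
      val_congr _ _ _ _ n (h + 1) s' (fun t s'' ht => hagree t s'' ht)
    simp only [hsum]
    rw [q_step πstar n h i _ hh2, hgood]
    have : π' h (Sum.inl i) = φ h i := by simp [hπ']
    rw [this, if_pos rfl]
  -- πstar must take the optimal action at (h, s_i)
  have hle := hopt π' (2 * H + 2 - h) h (Sum.inl i)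
  rw [hV, hV'] at hle
  have e1 : (1 / (2 * (H : ℝ))) * (1 + 2 * τ) * H = (1 + 2 * τ) / 2 := by
    field_simp
  have e2 : (1 / (2 * (H : ℝ))) * (1 + 0) * H = 1 / 2 := by
    field_simp; ring
  have e3 : (1 / (2 * (H : ℝ))) * 1 * H = 1 / 2 := by
    field_simp
  have hstar : πstar h (Sum.inl i) = φ h i := by
    by_contra hcon
    rw [if_neg hcon, e1, e2] at hle
    linarith
  rw [hV, hQ, hstar, if_pos rfl, e1, e3]
  ring
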